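/- Let $a<b$ and let $g:[a,b]\to\mathbb{R}$ be continuous with $g(t)>0$ for all $t$. If $w:[a,b]\to\mathbb{R}$ is continuous, is a viscosity solution of $|w'|=g$ on $(a,b)$, and satisfies $w(a)=w(b)=0$, then $w(t)=\min\left(\int_a^t g(r)\,dr,\ \int_t^b g(r)\,dr\right)$ for all $t\in[a,b]$; i.e., the function $d(t)=\min(\int_a^t g,\int_t^b g)$ is the unique continuous viscosity solution of $|u'|=g$ on $(a,b)$ vanishing at both endpoints. -/

import Mathlib

/-- `w` is a viscosity subsolution of `|w'| = g` on `(a,b)`. -/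
def ViscositySubsolution (a b : ℝ) (g w : ℝ → ℝ) : Prop :=
  ∀ t0 ∈ Set.Ioo a b, ∀ φ : ℝ → ℝ, Differentiable ℝ φ →
    IsLocalMax (fun t => w t - φ t) t0 → |deriv φ t0| ≤ g t0

/-- `w` is a viscosity supersolution of `|w'| = g` on `(a,b)`. -/
def ViscositySupersolution (a b : ℝ) (g w : ℝ → ℝ) : Prop :=
  ∀ t0 ∈ Set.Ioo a b, ∀ φ : ℝ → ℝ, Differentiable ℝ φ →
    IsLocalMin (fun t => w t - φ t) t0 → g t0 ≤ |deriv φ t0|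

open Real Set Filter Topology intervalIntegral

lemma aux_up (a b : ℝ) (g w gt G : ℝ → ℝ)
    (hG : ∀ x, HasDerivAt G (gt x) x)
    (hgteq : ∀ x ∈ Set.Icc a b, gt x = g x)
    (hw : ContinuousOn w (Set.Icc a b))
    (hsub : ViscositySubsolution a b g w)
    {s t : ℝ} (hs : s ∈ Set.Ioo a b) (ht : t ∈ Set.Ioo a b) (hst : s < t) :
    w t - w s ≤ G t - G s := by
  by_contra hcon
  push_neg at hcon
  have hGc : Continuous G := continuous_iff_continuousAt.mpr fun x => (hG x).continuousAt
  have hts : 0 < t - s := by linarith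
  set ε : ℝ := (w t - w s - (G t - G s)) / (2 * (t - s)) with hεdef
  have hε : 0 < ε := div_pos (by linarith) (by linarith)
  set ψ : ℝ → ℝ := fun x => w x - (G x + ε * x) with hψdef
  have hψc : ContinuousOn ψ (Set.Icc a b) :=
    hw.sub ((hGc.add (continuous_const.mul continuous_id)).continuousOn)
  have he : ε * (2 * (t - s)) = w t - w s - (G t - G s) := by
    rw [hεdef]; field_simp
  have hψst : ψ s < ψ t := by
    simp only [hψdef]
    nlinarith [he]
  have hψct : ContinuousAt ψ t := hψc.continuousAt (Icc_mem_nhds ht.1 ht.2)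
  have hne : (𝓝[Set.Ioo s t] t).NeBot := by
    refine mem_closure_iff_nhdsWithin_neBot.mp ?_
    rw [closure_Ioo (ne_of_lt hst)]
    exact ⟨hst.le, le_refl t⟩
  have hTend : Filter.Tendsto ψ (𝓝[Set.Ioo s t] t) (𝓝 (ψ t)) :=
    hψct.continuousWithinAt
  obtain ⟨x1, hx1ψ, hx1mem⟩ := ((hTend.eventually (eventually_gt_nhds hψst)).and
    eventually_mem_nhdsWithin).exists
  set B : ℝ := ψ x1 - ψ s with hBdef
  have hB : 0 < B := by simp only [hBdef]; linarith
  set A : ℝ := max (ψ t - ψ x1) 0 with hAdef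
  have hA0 : 0 ≤ A := le_max_right _ _
  have hA1 : ψ t - ψ x1 ≤ A := le_max_left _ _
  set δ : ℝ := B / 2 with hδdef
  have hδ : 0 < δ := by positivity
  have harg : (1:ℝ) < 2 * A / B + 2 := by
    have h0 : 0 ≤ 2 * A / B := by positivity
    linarith
  have htx1 : 0 < t - x1 := by linarith [hx1mem.2]
  set K : ℝ := Real.log (2 * A / B + 2) / (t - x1) with hKdef
  have hK : 0 < K := div_pos (Real.log_pos harg) htx1
  have hexpK : Real.exp (K * (t - x1)) = 2 * A / B + 2 := by
    rw [hKdef, div_mul_cancel₀ _ (ne_of_gt htx1)]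
    exact Real.exp_log (by linarith)
  set φ : ℝ → ℝ := fun x => G x + ε * x + δ * Real.exp (K * (x - x1)) with hφdef
  have hΨ : ∀ x, w x - φ x = ψ x - δ * Real.exp (K * (x - x1)) := by
    intro x; simp only [hφdef, hψdef]; ring
  have hΨx1 : w x1 - φ x1 = ψ x1 - δ := by
    rw [hΨ x1, sub_self, mul_zero, Real.exp_zero, mul_one]
  have hΨs : w s - φ s < w x1 - φ x1 := by
    rw [hΨx1, hΨ s]
    have h1 := mul_pos hδ (Real.exp_pos (K * (s - x1)))
    linarith
  have hΨt : w t - φ t < w x1 - φ x1 := by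
    rw [hΨx1, hΨ t]
    have hδt : δ * Real.exp (K * (t - x1)) = A + B := by
      rw [hexpK, hδdef]; field_simp
    rw [hδt]
    linarith
  have hφder : ∀ x, HasDerivAt φ (gt x + ε * 1 + δ * (Real.exp (K * (x - x1)) * (K * 1))) x := by
    intro x
    exact ((hG x).add (HasDerivAt.const_mul ε (hasDerivAt_id x))).add
      (HasDerivAt.const_mul δ (HasDerivAt.exp (HasDerivAt.const_mul K ((hasDerivAt_id x).sub_const x1))))
  have hφc : Continuous φ := continuous_iff_continuousAt.mpr fun x => (hφder x).continuousAt
  have hcontΨ : ContinuousOn (fun x => w x - φ x) (Set.Icc s t) :=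
    (hw.mono (Set.Icc_subset_Icc hs.1.le ht.2.le)).sub hφc.continuousOn
  obtain ⟨x0, hx0mem, hx0max⟩ := isCompact_Icc.exists_isMaxOn (Set.nonempty_Icc.mpr hst.le) hcontΨ
  have hmax1 : w x1 - φ x1 ≤ w x0 - φ x0 := hx0max (Set.Ioo_subset_Icc_self hx1mem)
  have hx0s : s < x0 := lt_of_le_of_ne hx0mem.1 (by rintro rfl; linarith)
  have hx0t : x0 < t := lt_of_le_of_ne hx0mem.2 (by rintro rfl; linarith)
  have hx0ab : x0 ∈ Set.Ioo a b := ⟨hs.1.trans hx0s, hx0t.trans ht.2⟩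
  have hloc : IsLocalMax (fun x => w x - φ x) x0 := hx0max.isLocalMax (Icc_mem_nhds hx0s hx0t)
  have hsb := hsub x0 hx0ab φ (fun x => (hφder x).differentiableAt) hloc
  rw [(hφder x0).deriv] at hsb
  have hgg : gt x0 = g x0 := hgteq x0 ⟨hx0ab.1.le, hx0ab.2.le⟩
  have habs := le_abs_self (gt x0 + ε * 1 + δ * (Real.exp (K * (x0 - x1)) * (K * 1)))
  have hp : 0 < δ * (Real.exp (K * (x0 - x1)) * (K * 1)) := by positivity
  linarith

lemma aux_down (a b : ℝ) (g w gt G : ℝ → ℝ)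
    (hG : ∀ x, HasDerivAt G (gt x) x)
    (hgteq : ∀ x ∈ Set.Icc a b, gt x = g x)
    (hw : ContinuousOn w (Set.Icc a b))
    (hsub : ViscositySubsolution a b g w)
    {s t : ℝ} (hs : s ∈ Set.Ioo a b) (ht : t ∈ Set.Ioo a b) (hst : s < t) :
    w s - w t ≤ G t - G s := by
  by_contra hcon
  push_neg at hcon
  have hGc : Continuous G := continuous_iff_continuousAt.mpr fun x => (hG x).continuousAt
  have hts : 0 < t - s := by linarith
  set ε : ℝ := (w s - w t - (G t - G s)) / (2 * (t - s)) with hεdef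
  have hε : 0 < ε := div_pos (by linarith) (by linarith)
  set ψ : ℝ → ℝ := fun x => w x + (G x + ε * x) with hψdef
  have hψc : ContinuousOn ψ (Set.Icc a b) :=
    hw.add ((hGc.add (continuous_const.mul continuous_id)).continuousOn)
  have he : ε * (2 * (t - s)) = w s - w t - (G t - G s) := by
    rw [hεdef]; field_simp
  have hψst : ψ t < ψ s := by
    simp only [hψdef]
    nlinarith [he]
  have hψcs : ContinuousAt ψ s := hψc.continuousAt (Icc_mem_nhds hs.1 hs.2)
  have hne : (𝓝[Set.Ioo s t] s).NeBot := by
    refine mem_closure_iff_nhdsWithin_neBot.mp ?_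
    rw [closure_Ioo (ne_of_lt hst)]
    exact ⟨le_refl s, hst.le⟩
  have hTend : Filter.Tendsto ψ (𝓝[Set.Ioo s t] s) (𝓝 (ψ s)) :=
    hψcs.continuousWithinAt
  obtain ⟨x1, hx1ψ, hx1mem⟩ := ((hTend.eventually (eventually_gt_nhds hψst)).and
    eventually_mem_nhdsWithin).exists
  set B : ℝ := ψ x1 - ψ t with hBdef
  have hB : 0 < B := by simp only [hBdef]; linarith
  set A : ℝ := max (ψ s - ψ x1) 0 with hAdef
  have hA0 : 0 ≤ A := le_max_right _ _
  have hA1 : ψ s - ψ x1 ≤ A := le_max_left _ _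
  set δ : ℝ := B / 2 with hδdef
  have hδ : 0 < δ := by positivity
  have harg : (1:ℝ) < 2 * A / B + 2 := by
    have h0 : 0 ≤ 2 * A / B := by positivity
    linarith
  have hx1s : 0 < x1 - s := by linarith [hx1mem.1]
  set K : ℝ := Real.log (2 * A / B + 2) / (x1 - s) with hKdef
  have hK : 0 < K := div_pos (Real.log_pos harg) hx1s
  have hexpK : Real.exp (K * (x1 - s)) = 2 * A / B + 2 := by
    rw [hKdef, div_mul_cancel₀ _ (ne_of_gt hx1s)]
    exact Real.exp_log (by linarith)
  set φ : ℝ → ℝ := fun x => δ * Real.exp (K * (x1 - x)) - (G x + ε * x) with hφdef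
  have hΨ : ∀ x, w x - φ x = ψ x - δ * Real.exp (K * (x1 - x)) := by
    intro x; simp only [hφdef, hψdef]; ring
  have hΨx1 : w x1 - φ x1 = ψ x1 - δ := by
    rw [hΨ x1, sub_self, mul_zero, Real.exp_zero, mul_one]
  have hΨt : w t - φ t < w x1 - φ x1 := by
    rw [hΨx1, hΨ t]
    have h1 := mul_pos hδ (Real.exp_pos (K * (x1 - t)))
    linarith
  have hΨs : w s - φ s < w x1 - φ x1 := by
    rw [hΨx1, hΨ s]
    have hδs : δ * Real.exp (K * (x1 - s)) = A + B := by
      rw [hexpK, hδdef]; field_simp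
    rw [hδs]
    linarith
  have hφder : ∀ x, HasDerivAt φ (δ * (Real.exp (K * (x1 - x)) * (K * (0 - 1))) - (gt x + ε * 1)) x := by
    intro x
    exact (HasDerivAt.const_mul δ (HasDerivAt.exp (HasDerivAt.const_mul K
      ((hasDerivAt_const x x1).sub (hasDerivAt_id x))))).sub
      ((hG x).add (HasDerivAt.const_mul ε (hasDerivAt_id x)))
  have hφc : Continuous φ := continuous_iff_continuousAt.mpr fun x => (hφder x).continuousAt
  have hcontΨ : ContinuousOn (fun x => w x - φ x) (Set.Icc s t) :=
    (hw.mono (Set.Icc_subset_Icc hs.1.le ht.2.le)).sub hφc.continuousOn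
  obtain ⟨x0, hx0mem, hx0max⟩ := isCompact_Icc.exists_isMaxOn (Set.nonempty_Icc.mpr hst.le) hcontΨ
  have hmax1 : w x1 - φ x1 ≤ w x0 - φ x0 := hx0max (Set.Ioo_subset_Icc_self hx1mem)
  have hx0s : s < x0 := lt_of_le_of_ne hx0mem.1 (by rintro rfl; linarith)
  have hx0t : x0 < t := lt_of_le_of_ne hx0mem.2 (by rintro rfl; linarith)
  have hx0ab : x0 ∈ Set.Ioo a b := ⟨hs.1.trans hx0s, hx0t.trans ht.2⟩
  have hloc : IsLocalMax (fun x => w x - φ x) x0 := hx0max.isLocalMax (Icc_mem_nhds hx0s hx0t)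
  have hsb := hsub x0 hx0ab φ (fun x => (hφder x).differentiableAt) hloc
  rw [(hφder x0).deriv] at hsb
  have hgg : gt x0 = g x0 := hgteq x0 ⟨hx0ab.1.le, hx0ab.2.le⟩
  have habs := neg_le_abs (δ * (Real.exp (K * (x1 - x0)) * (K * (0 - 1))) - (gt x0 + ε * 1))
  have hp : 0 < δ * (Real.exp (K * (x1 - x0)) * K) := by positivity
  have heq : δ * (Real.exp (K * (x1 - x0)) * (K * (0 - 1))) = -(δ * (Real.exp (K * (x1 - x0)) * K)) := by
    ring
  linarith

lemma aux_low (a b : ℝ) (hab : a < b) (g w gt G : ℝ → ℝ)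
    (hG : ∀ x, HasDerivAt G (gt x) x) (hGa : G a = 0)
    (hgteq : ∀ x ∈ Set.Icc a b, gt x = g x)
    (hgtpos : ∀ x, 0 < gt x)
    (hgpos : ∀ x ∈ Set.Icc a b, 0 < g x)
    (hw : ContinuousOn w (Set.Icc a b))
    (hsuper : ViscositySupersolution a b g w)
    (hwa : w a = 0) (hwb : w b = 0)
    {lam k : ℝ} (hlam0 : 0 < lam) (hlam1 : lam < 1) (hk : 0 < k) :
    ∀ t ∈ Set.Icc a b, lam * (min (G t) (G b - G t) - Real.log 2 / k) ≤ w t := by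
  set v : ℝ → ℝ := fun x => -(1/k) * Real.log (Real.exp (-(k * G x)) + Real.exp (-(k * (G b - G x)))) with hvdef
  have hEpos : ∀ x : ℝ, (0:ℝ) < Real.exp (-(k * G x)) + Real.exp (-(k * (G b - G x))) :=
    fun x => add_pos (Real.exp_pos _) (Real.exp_pos _)
  have hvder : ∀ x, HasDerivAt (fun y => lam * v y)
      (lam * (-(1/k) * ((Real.exp (-(k * G x)) * (-(k * gt x)) + Real.exp (-(k * (G b - G x))) * (-(k * (0 - gt x)))) / (Real.exp (-(k * G x)) + Real.exp (-(k * (G b - G x))))))) x := by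
    intro x
    exact HasDerivAt.const_mul lam (HasDerivAt.const_mul (-(1/k))
      (HasDerivAt.log ((HasDerivAt.exp (HasDerivAt.neg (HasDerivAt.const_mul k (hG x)))).add
        (HasDerivAt.exp (HasDerivAt.neg (HasDerivAt.const_mul k ((hasDerivAt_const x (G b)).sub (hG x)))))) (ne_of_gt (hEpos x))))
  have hvc : Continuous fun y => lam * v y :=
    continuous_iff_continuousAt.mpr fun x => (hvder x).continuousAt
  have hbound : ∀ x ∈ Set.Icc a b, |deriv (fun y => lam * v y) x| ≤ lam * g x := by
    intro x hx
    rw [(hvder x).deriv]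
    have he1 : 0 < Real.exp (-(k * G x)) := Real.exp_pos _
    have he2 : 0 < Real.exp (-(k * (G b - G x))) := Real.exp_pos _
    have heq : lam * (-(1/k) * ((Real.exp (-(k * G x)) * (-(k * gt x)) + Real.exp (-(k * (G b - G x))) * (-(k * (0 - gt x)))) / (Real.exp (-(k * G x)) + Real.exp (-(k * (G b - G x)))))) =
        (lam * gt x) * ((Real.exp (-(k * G x)) - Real.exp (-(k * (G b - G x)))) / (Real.exp (-(k * G x)) + Real.exp (-(k * (G b - G x))))) := by
      field_simp
      ring
    rw [heq, abs_mul]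
    have h1 : |lam * gt x| = lam * gt x := abs_of_pos (mul_pos hlam0 (hgtpos x))
    have h2 : |(Real.exp (-(k * G x)) - Real.exp (-(k * (G b - G x)))) / (Real.exp (-(k * G x)) + Real.exp (-(k * (G b - G x))))| ≤ 1 := by
      rw [abs_div, abs_of_pos (hEpos x)]
      refine (div_le_one (hEpos x)).mpr ?_
      exact abs_le.mpr ⟨by linarith, by linarith⟩
    rw [h1, ← hgteq x hx]
    calc lam * gt x * |(Real.exp (-(k * G x)) - Real.exp (-(k * (G b - G x)))) / (Real.exp (-(k * G x)) + Real.exp (-(k * (G b - G x))))|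
        ≤ lam * gt x * 1 := mul_le_mul_of_nonneg_left h2 (mul_pos hlam0 (hgtpos x)).le
      _ = lam * gt x := mul_one _
  have hkv : ∀ x, k * v x = -Real.log (Real.exp (-(k * G x)) + Real.exp (-(k * (G b - G x)))) := by
    intro x
    rw [hvdef]
    field_simp
  have hvle1 : ∀ x, v x ≤ G x := by
    intro x
    have hlog : -(k * G x) ≤ Real.log (Real.exp (-(k * G x)) + Real.exp (-(k * (G b - G x)))) := by
      have h := Real.log_le_log (Real.exp_pos (-(k * G x)))
        (le_add_of_nonneg_right (Real.exp_pos (-(k * (G b - G x)))).le)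
      rwa [Real.log_exp] at h
    refine le_of_mul_le_mul_left ?_ hk
    rw [hkv x]
    linarith
  have hvle2 : ∀ x, v x ≤ G b - G x := by
    intro x
    have hlog : -(k * (G b - G x)) ≤ Real.log (Real.exp (-(k * G x)) + Real.exp (-(k * (G b - G x)))) := by
      have h := Real.log_le_log (Real.exp_pos (-(k * (G b - G x))))
        (le_add_of_nonneg_left (Real.exp_pos (-(k * G x))).le)
      rwa [Real.log_exp] at h
    refine le_of_mul_le_mul_left ?_ hk
    rw [hkv x]
    linarith
  have hvge : ∀ x, min (G x) (G b - G x) - Real.log 2 / k ≤ v x := by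
    intro x
    have hm1 : min (G x) (G b - G x) ≤ G x := min_le_left _ _
    have hm2 : min (G x) (G b - G x) ≤ G b - G x := min_le_right _ _
    have he1 : Real.exp (-(k * G x)) ≤ Real.exp (-(k * min (G x) (G b - G x))) :=
      Real.exp_le_exp.mpr (neg_le_neg (mul_le_mul_of_nonneg_left hm1 hk.le))
    have he2 : Real.exp (-(k * (G b - G x))) ≤ Real.exp (-(k * min (G x) (G b - G x))) :=
      Real.exp_le_exp.mpr (neg_le_neg (mul_le_mul_of_nonneg_left hm2 hk.le))
    have hlog : Real.log (Real.exp (-(k * G x)) + Real.exp (-(k * (G b - G x)))) ≤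
        Real.log 2 + -(k * min (G x) (G b - G x)) := by
      have hle : Real.exp (-(k * G x)) + Real.exp (-(k * (G b - G x))) ≤
          2 * Real.exp (-(k * min (G x) (G b - G x))) := by linarith
      calc Real.log (Real.exp (-(k * G x)) + Real.exp (-(k * (G b - G x))))
          ≤ Real.log (2 * Real.exp (-(k * min (G x) (G b - G x)))) := Real.log_le_log (hEpos x) hle
        _ = Real.log 2 + -(k * min (G x) (G b - G x)) := by
            rw [Real.log_mul two_ne_zero (Real.exp_ne_zero _), Real.log_exp]
    refine le_of_mul_le_mul_left ?_ hk
    rw [hkv x]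
    have ha : k * (min (G x) (G b - G x) - Real.log 2 / k) = k * min (G x) (G b - G x) - Real.log 2 := by
      field_simp
    rw [ha]
    linarith
  have hΦc : ContinuousOn (fun x => w x - lam * v x) (Set.Icc a b) := hw.sub hvc.continuousOn
  obtain ⟨x0, hx0, hmin⟩ := isCompact_Icc.exists_isMinOn (Set.nonempty_Icc.mpr hab.le) hΦc
  have hkey : 0 ≤ w x0 - lam * v x0 := by
    by_cases hoo : x0 ∈ Set.Ioo a b
    · exfalso
      have hloc : IsLocalMin (fun x => w x - lam * v x) x0 := hmin.isLocalMin (Icc_mem_nhds hoo.1 hoo.2)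
      have hss := hsuper x0 hoo (fun y => lam * v y) (fun x => (hvder x).differentiableAt) hloc
      have hb := hbound x0 hx0
      have hlt := mul_lt_mul_of_pos_right hlam1 (hgpos x0 hx0)
      rw [one_mul] at hlt
      linarith
    · have hx0ab : x0 = a ∨ x0 = b := by
        rcases hx0.1.eq_or_lt with h | h
        · exact Or.inl h.symm
        rcases hx0.2.eq_or_lt with h2 | h2
        · exact Or.inr h2
        · exact absurd ⟨h, h2⟩ hoo
      rcases hx0ab with h | h
      · have hva : v a ≤ 0 := by have := hvle1 a; rwa [hGa] at this
        rw [h, hwa]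
        nlinarith [mul_nonneg hlam0.le (neg_nonneg.mpr hva)]
      · have hvb : v b ≤ 0 := by have := hvle2 b; rwa [sub_self] at this
        rw [h, hwb]
        nlinarith [mul_nonneg hlam0.le (neg_nonneg.mpr hvb)]
  intro t ht
  have h1 : w x0 - lam * v x0 ≤ w t - lam * v t := hmin ht
  have h3 : lam * (min (G t) (G b - G t) - Real.log 2 / k) ≤ lam * v t :=
    mul_le_mul_of_nonneg_left (hvge t) hlam0.le
  linarith

theorem eikonal_uniqueness (a b : ℝ) (hab : a < b) (g w : ℝ → ℝ)
    (hg : ContinuousOn g (Set.Icc a b)) (hgpos : ∀ t ∈ Set.Icc a b, 0 < g t)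
    (hw : ContinuousOn w (Set.Icc a b))
    (hsub : ViscositySubsolution a b g w) (hsuper : ViscositySupersolution a b g w)
    (hwa : w a = 0) (hwb : w b = 0) :
    ∀ t ∈ Set.Icc a b, w t = min (∫ r in a..t, g r) (∫ r in t..b, g r) := by
  have hmem : ∀ x : ℝ, max a (min x b) ∈ Set.Icc a b :=
    fun x => ⟨le_max_left _ _, max_le hab.le (min_le_right _ _)⟩
  set gt : ℝ → ℝ := fun x => g (max a (min x b)) with hgtdef
  have hgtc : Continuous gt :=
    hg.comp_continuous (continuous_const.max (continuous_id.min continuous_const)) hmem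
  have hgteq : ∀ x ∈ Set.Icc a b, gt x = g x := by
    intro x hx
    simp only [hgtdef]
    rw [min_eq_left hx.2, max_eq_right hx.1]
  have hgtpos : ∀ x, 0 < gt x := fun x => hgpos _ (hmem x)
  set G : ℝ → ℝ := fun u => ∫ r in a..u, gt r with hGdef
  have hG : ∀ x, HasDerivAt G (gt x) x := fun x =>
    intervalIntegral.integral_hasDerivAt_right (hgtc.intervalIntegrable _ _)
      (hgtc.stronglyMeasurableAtFilter _ _) hgtc.continuousAt
  have hGa : G a = 0 := intervalIntegral.integral_same
  have hGc : Continuous G := continuous_iff_continuousAt.mpr fun x => (hG x).continuousAt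
  have hGadd : ∀ t : ℝ, G t + ∫ r in t..b, gt r = G b := fun t =>
    intervalIntegral.integral_add_adjacent_intervals (hgtc.intervalIntegrable _ _)
      (hgtc.intervalIntegrable _ _)
  have hGnonneg : ∀ t ∈ Set.Icc a b, 0 ≤ G t := fun t ht =>
    intervalIntegral.integral_nonneg ht.1 (fun u _ => (hgtpos u).le)
  have hGb2 : ∀ t ∈ Set.Icc a b, 0 ≤ G b - G t := by
    intro t ht
    have h0 : 0 ≤ ∫ r in t..b, gt r :=
      intervalIntegral.integral_nonneg ht.2 (fun u _ => (hgtpos u).le)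
    linarith [hGadd t]
  -- Upper bound 1 : w t ≤ G t
  have hU1 : ∀ t ∈ Set.Icc a b, w t ≤ G t := by
    intro t ht
    rcases ht.1.eq_or_lt with h | hat
    · rw [← h, hwa, hGa]
    rcases ht.2.eq_or_lt with h | htb
    · rw [h, hwb]; exact hGnonneg b ⟨hab.le, le_refl b⟩
    have hkey : ∀ s ∈ Set.Ioo a t, w t - w s ≤ G t - G s := fun s hs =>
      aux_up a b g w gt G hG hgteq hw hsub ⟨hs.1, hs.2.trans htb⟩ ⟨hat, htb⟩ hs.2
    have hne : (𝓝[Set.Ioo a t] a).NeBot := by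
      refine mem_closure_iff_nhdsWithin_neBot.mp ?_
      rw [closure_Ioo (ne_of_lt hat)]
      exact ⟨le_refl a, hat.le⟩
    have htw : Filter.Tendsto (fun s => w t - w s) (𝓝[Set.Ioo a t] a) (𝓝 (w t - w a)) := by
      refine tendsto_const_nhds.sub ?_
      exact (hw.continuousWithinAt ⟨le_refl a, hab.le⟩).mono
        (fun x hx => ⟨hx.1.le, (hx.2.trans htb).le⟩)
    have htG : Filter.Tendsto (fun s => G t - G s) (𝓝[Set.Ioo a t] a) (𝓝 (G t - G a)) :=
      tendsto_const_nhds.sub ((hGc.tendsto a).mono_left nhdsWithin_le_nhds)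
    have hle := le_of_tendsto_of_tendsto htw htG
      (eventually_mem_nhdsWithin.mono (fun s hs => hkey s hs))
    rw [hwa, hGa] at hle
    linarith
  -- Upper bound 2 : w t ≤ G b - G t
  have hU2 : ∀ t ∈ Set.Icc a b, w t ≤ G b - G t := by
    intro t ht
    rcases ht.2.eq_or_lt with h | htb
    · rw [h, hwb]; linarith
    rcases ht.1.eq_or_lt with h | hat
    · rw [← h, hwa]
      exact hGb2 a ⟨le_refl a, hab.le⟩
    have hkey : ∀ u ∈ Set.Ioo t b, w t - w u ≤ G u - G t := fun u hu =>
      aux_down a b g w gt G hG hgteq hw hsub ⟨hat, htb⟩ ⟨hat.trans hu.1, hu.2⟩ hu.1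
    have hne : (𝓝[Set.Ioo t b] b).NeBot := by
      refine mem_closure_iff_nhdsWithin_neBot.mp ?_
      rw [closure_Ioo (ne_of_lt htb)]
      exact ⟨htb.le, le_refl b⟩
    have htw : Filter.Tendsto (fun u => w t - w u) (𝓝[Set.Ioo t b] b) (𝓝 (w t - w b)) := by
      refine tendsto_const_nhds.sub ?_
      exact (hw.continuousWithinAt ⟨hab.le, le_refl b⟩).mono
        (fun x hx => ⟨(hat.trans hx.1).le, hx.2.le⟩)
    have htG : Filter.Tendsto (fun u => G u - G t) (𝓝[Set.Ioo t b] b) (𝓝 (G b - G t)) :=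
      ((hGc.tendsto b).mono_left nhdsWithin_le_nhds).sub tendsto_const_nhds
    have hle := le_of_tendsto_of_tendsto htw htG
      (eventually_mem_nhdsWithin.mono (fun u hu => hkey u hu))
    rw [hwb] at hle
    linarith
  -- Lower bound
  have hL : ∀ t ∈ Set.Icc a b, min (G t) (G b - G t) ≤ w t := by
    intro t ht
    by_contra hcon
    push_neg at hcon
    set m : ℝ := min (G t) (G b - G t) with hmdef
    have hm0 : 0 ≤ m := le_min (hGnonneg t ht) (hGb2 t ht)
    have hd0 : 0 < m - w t := by linarith
    have hlog2 : 0 < Real.log 2 := Real.log_pos one_lt_two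
    set k : ℝ := 2 * Real.log 2 / (m - w t) with hkdef
    have hk0 : 0 < k := by positivity
    have hkd : Real.log 2 / k = (m - w t) / 2 := by
      rw [hkdef]
      field_simp
    set lam : ℝ := 1 - min (1/2) ((m - w t) / (2 * (m + 1))) with hlamdef
    have h12 : 0 < min (1/2 : ℝ) ((m - w t) / (2 * (m + 1))) :=
      lt_min (by norm_num) (by positivity)
    have hlam0 : 0 < lam := by
      have h1 := min_le_left (1/2 : ℝ) ((m - w t) / (2 * (m + 1)))
      rw [hlamdef]; linarith
    have hlam1 : lam < 1 := by rw [hlamdef]; linarith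
    have hlb := aux_low a b hab g w gt G hG hGa hgteq hgtpos hgpos hw hsuper hwa hwb
      hlam0 hlam1 hk0 t ht
    rw [hkd] at hlb
    -- (1 - lam) * m < (m - w t)/2
    have h1 : (1 - lam) * m ≤ (m - w t) / (2 * (m + 1)) * m := by
      refine mul_le_mul_of_nonneg_right ?_ hm0
      rw [hlamdef]
      simp only [sub_sub_cancel]
      exact min_le_right _ _
    have h2 : (m - w t) / (2 * (m + 1)) * m < (m - w t) / 2 := by
      rw [div_mul_eq_mul_div, div_lt_div_iff₀ (by positivity) (by norm_num : (0:ℝ) < 2)]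
      nlinarith
    have h3 : lam * ((m - w t) / 2) < (m - w t) / 2 := by nlinarith
    have heq : lam * (m - (m - w t) / 2) = lam * m - lam * ((m - w t) / 2) := by ring
    have h4 : lam * m > m - (m - w t) / 2 := by nlinarith
    linarith
  intro t ht
  have e0 : (∫ r in a..t, g r) = G t := by
    rw [hGdef]
    refine intervalIntegral.integral_congr ?_
    intro x hx
    rw [Set.uIcc_of_le ht.1] at hx
    exact (hgteq x ⟨hx.1, hx.2.trans ht.2⟩).symm
  have e1 : (∫ r in t..b, g r) = G b - G t := by
    have ec : (∫ r in t..b, g r) = ∫ r in t..b, gt r := by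
      refine intervalIntegral.integral_congr ?_
      intro x hx
      rw [Set.uIcc_of_le ht.2] at hx
      exact (hgteq x ⟨ht.1.trans hx.1, hx.2⟩).symm
    rw [ec]
    linarith [hGadd t]
  rw [e0, e1]
  exact le_antisymm (le_min (hU1 t ht) (hU2 t ht)) (hL t ht)
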